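/- Fix μ > 0, λ > 0, m ≥ 1, k ≥ 1, and nodes a¹,…,a^m ∈ ℝⁿ forming the rows of the m×n matrix 𝐀. Define g_μ(𝐗) = ((1+λ)μ/2) Σ_{i=1}^m Σ_{ℓ=1}^{k+1} ‖(x^ℓ − a^i)/μ‖² + (μ/2) Σ_{ℓ=1}^{k+1} Σ_{j=1}^{k+1} ‖(x^ℓ − x^j)/μ‖² for 𝐗 ∈ ℝ^{(k+1)×n} with rows x^ℓ. Then for every 𝐘 ∈ ℝ^{(k+1)×n}, the equation ∇g_μ(𝐗) = 𝐘 has the unique solution 𝐗 = (α𝕀 + β𝐄)·((1+λ)𝐄₁𝐀 + μ𝐘), where α = 1/(m(λ+1) + 2(k+1)), β = 2/(m(λ+1)·[m(λ+1) + 2(k+1)]), 𝐄 is the (k+1)×(k+1) all-ones matrix, 𝐄₁ the (k+1)×m all-ones matrix, and 𝕀 the identity matrix of size k+1. -/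

import Mathlib

set_option maxHeartbeats 1000000

open Finset

local notation "⟪" x ", " y "⟫" => @inner ℝ _ _ x y

lemma esum_apply {n : ℕ} {ι : Type*} (s : Finset ι) (f : ι → EuclideanSpace ℝ (Fin n))
    (i : Fin n) : (∑ t ∈ s, f t) i = ∑ t ∈ s, f t i :=
  map_sum (PiLp.projₗ (𝕜 := ℝ) 2 (fun _ : Fin n => ℝ) i) f s

lemma grad_aux {n m k : ℕ} (μ lam : ℝ) (hμ : μ ≠ 0)
    (a : Fin m → EuclideanSpace ℝ (Fin n))
    (X : PiLp 2 fun _ : Fin (k + 1) => EuclideanSpace ℝ (Fin n)) :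
    HasGradientAt
        (fun Z : PiLp 2 fun _ : Fin (k + 1) => EuclideanSpace ℝ (Fin n) =>
          ((1 + lam) * μ / 2) * ∑ i, ∑ ℓ, ‖μ⁻¹ • (Z ℓ - a i)‖ ^ 2
            + (μ / 2) * ∑ ℓ, ∑ j, ‖μ⁻¹ • (Z ℓ - Z j)‖ ^ 2)
        (WithLp.toLp 2 (fun ℓ => ((1+lam)/μ) • ((m:ℝ) • X ℓ - ∑ i, a i)
          + (2/μ) • (((k:ℝ)+1) • X ℓ - ∑ j, X j))) X := by
  classical
  have key : ∀ w : EuclideanSpace ℝ (Fin n), ‖μ⁻¹ • w‖^2 = μ⁻¹^2 * ⟪w, w⟫ := by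
    intro w
    rw [norm_smul, mul_pow, real_inner_self_eq_norm_sq, Real.norm_eq_abs, sq_abs]
  have hfun : (fun Z : PiLp 2 fun _ : Fin (k + 1) => EuclideanSpace ℝ (Fin n) =>
          ((1 + lam) * μ / 2) * ∑ i, ∑ ℓ, ‖μ⁻¹ • (Z ℓ - a i)‖ ^ 2
            + (μ / 2) * ∑ ℓ, ∑ j, ‖μ⁻¹ • (Z ℓ - Z j)‖ ^ 2)
      = (fun Z : PiLp 2 fun _ : Fin (k + 1) => EuclideanSpace ℝ (Fin n) =>
          ((1 + lam) * μ / 2 * μ⁻¹^2) * ∑ i, ∑ ℓ, ⟪Z ℓ - a i, Z ℓ - a i⟫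
            + (μ / 2 * μ⁻¹^2) * ∑ ℓ, ∑ j, ⟪Z ℓ - Z j, Z ℓ - Z j⟫) := by
    funext Z
    simp only [key, Finset.mul_sum]
    congr 1 <;>
      · refine Finset.sum_congr rfl fun _ _ => ?_
        refine Finset.sum_congr rfl fun _ _ => ?_
        ring
  rw [hfun, hasGradientAt_iff_hasFDerivAt]
  set P : ∀ _ : Fin (k+1), (PiLp 2 fun _ : Fin (k + 1) => EuclideanSpace ℝ (Fin n)) →L[ℝ]
      EuclideanSpace ℝ (Fin n) := fun ℓ => PiLp.proj (𝕜 := ℝ) 2 _ ℓ with hPdef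
  have hA : ∀ (i : Fin m) (ℓ : Fin (k+1)),
      HasFDerivAt (fun Z : PiLp 2 fun _ : Fin (k + 1) => EuclideanSpace ℝ (Fin n) =>
          ⟪Z ℓ - a i, Z ℓ - a i⟫)
        ((fderivInnerCLM ℝ (X ℓ - a i, X ℓ - a i)).comp ((P ℓ).prod (P ℓ))) X := by
    intro i ℓ
    exact HasFDerivAt.inner ℝ ((P ℓ).hasFDerivAt.sub_const (a i))
      ((P ℓ).hasFDerivAt.sub_const (a i))
  have hB : ∀ (ℓ j : Fin (k+1)),
      HasFDerivAt (fun Z : PiLp 2 fun _ : Fin (k + 1) => EuclideanSpace ℝ (Fin n) =>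
          ⟪Z ℓ - Z j, Z ℓ - Z j⟫)
        ((fderivInnerCLM ℝ (X ℓ - X j, X ℓ - X j)).comp ((P ℓ - P j).prod (P ℓ - P j))) X := by
    intro ℓ j
    exact HasFDerivAt.inner ℝ ((P ℓ).hasFDerivAt.sub (P j).hasFDerivAt)
      ((P ℓ).hasFDerivAt.sub (P j).hasFDerivAt)
  have hsum := (((HasFDerivAt.fun_sum (fun i (_ : i ∈ Finset.univ) =>
      HasFDerivAt.fun_sum (fun ℓ (_ : ℓ ∈ Finset.univ) => hA i ℓ))).const_mul
        ((1 + lam) * μ / 2 * μ⁻¹^2)).fun_add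
    ((HasFDerivAt.fun_sum (fun ℓ (_ : ℓ ∈ Finset.univ) =>
      HasFDerivAt.fun_sum (fun j (_ : j ∈ Finset.univ) => hB ℓ j))).const_mul (μ / 2 * μ⁻¹^2)))
  refine hsum.congr_fderiv ?_
  apply ContinuousLinearMap.ext
  intro v
  simp only [ContinuousLinearMap.add_apply, ContinuousLinearMap.smul_apply,
    ContinuousLinearMap.coe_sum', Finset.sum_apply, ContinuousLinearMap.comp_apply,
    ContinuousLinearMap.prod_apply, ContinuousLinearMap.sub_apply, fderivInnerCLM_apply,
    InnerProductSpace.toDual_apply_apply, PiLp.inner_apply, hPdef, PiLp.proj_apply, smul_eq_mul]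
  simp only [RCLike.inner_apply, conj_trivial, PiLp.smul_apply, PiLp.add_apply,
    PiLp.sub_apply, Finset.sum_apply, smul_eq_mul, mul_sub, sub_mul, add_mul,
    Finset.mul_sum, Finset.sum_sub_distrib, Finset.sum_add_distrib]
  simp only [esum_apply, Finset.sum_const, Finset.card_univ, Fintype.card_fin,
    nsmul_eq_mul, Finset.mul_sum, Finset.sum_sub_distrib, Finset.sum_add_distrib,
    Nat.cast_add, Nat.cast_one]
  have hA1 : ∑ t : Fin m, ∑ x : Fin (k+1), ∑ i : Fin n, v x i * a t i
      = ∑ x : Fin (k+1), ∑ i : Fin n, ∑ t : Fin m, v x i * a t i := by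
    rw [Finset.sum_comm]; exact Finset.sum_congr rfl fun _ _ => Finset.sum_comm
  have hA2 : ∑ t : Fin m, ∑ x : Fin (k+1), ∑ i : Fin n, a t i * v x i
      = ∑ x : Fin (k+1), ∑ i : Fin n, ∑ t : Fin m, v x i * a t i := by
    rw [Finset.sum_comm]; refine Finset.sum_congr rfl fun _ _ => ?_; rw [Finset.sum_comm]
    exact Finset.sum_congr rfl fun _ _ => Finset.sum_congr rfl fun _ _ => mul_comm _ _
  have hB1 : ∑ y : Fin (k+1), ∑ x : Fin (k+1), ∑ i : Fin n, v x i * X y i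
      = ∑ x : Fin (k+1), ∑ i : Fin n, ∑ y : Fin (k+1), v x i * X y i := by
    rw [Finset.sum_comm]; exact Finset.sum_congr rfl fun _ _ => Finset.sum_comm
  have hB4 : ∑ y : Fin (k+1), ∑ x : Fin (k+1), ∑ i : Fin n, X y i * v x i
      = ∑ x : Fin (k+1), ∑ i : Fin n, ∑ y : Fin (k+1), v x i * X y i := by
    rw [Finset.sum_comm]; refine Finset.sum_congr rfl fun _ _ => ?_; rw [Finset.sum_comm]
    exact Finset.sum_congr rfl fun _ _ => Finset.sum_congr rfl fun _ _ => mul_comm _ _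
  have hB2 : ∑ x : Fin (k+1), ∑ y : Fin (k+1), ∑ i : Fin n, v x i * X y i
      = ∑ x : Fin (k+1), ∑ i : Fin n, ∑ y : Fin (k+1), v x i * X y i :=
    Finset.sum_congr rfl fun _ _ => Finset.sum_comm
  have hB3 : ∑ x : Fin (k+1), ∑ y : Fin (k+1), ∑ i : Fin n, X y i * v x i
      = ∑ x : Fin (k+1), ∑ i : Fin n, ∑ y : Fin (k+1), v x i * X y i := by
    refine Finset.sum_congr rfl fun _ _ => ?_; rw [Finset.sum_comm]
    exact Finset.sum_congr rfl fun _ _ => Finset.sum_congr rfl fun _ _ => mul_comm _ _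
  rw [hA1, hA2, hB1, hB2, hB3, hB4]
  simp only [Finset.mul_sum, ← Finset.sum_sub_distrib, ← Finset.sum_add_distrib]
  refine Finset.sum_congr rfl fun x _ => Finset.sum_congr rfl fun i _ => ?_
  simp only [Finset.sum_sub_distrib, Finset.sum_add_distrib, ← Finset.mul_sum, ← Finset.sum_mul]
  field_simp
  ring


theorem stmt_17 {n m k : ℕ} (hm : 1 ≤ m) (hk : 1 ≤ k)
    (μ lam : ℝ) (hμ : 0 < μ) (hlam : 0 < lam)
    (a : Fin m → EuclideanSpace ℝ (Fin n))
    (Y X : PiLp 2 fun _ : Fin (k + 1) => EuclideanSpace ℝ (Fin n)) :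
    HasGradientAt
        (fun Z : PiLp 2 fun _ : Fin (k + 1) => EuclideanSpace ℝ (Fin n) =>
          ((1 + lam) * μ / 2) * ∑ i, ∑ ℓ, ‖μ⁻¹ • (Z ℓ - a i)‖ ^ 2
            + (μ / 2) * ∑ ℓ, ∑ j, ‖μ⁻¹ • (Z ℓ - Z j)‖ ^ 2) Y X
      ↔ X = fun ℓ =>
          (1 / ((m : ℝ) * (lam + 1) + 2 * ((k : ℝ) + 1))) •
              ((1 + lam) • (∑ i, a i) + μ • Y ℓ)
            + (2 / ((m : ℝ) * (lam + 1) * ((m : ℝ) * (lam + 1) + 2 * ((k : ℝ) + 1)))) •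
              (∑ j, ((1 + lam) • (∑ i, a i) + μ • Y j)) := by
  have hμ' : μ ≠ 0 := ne_of_gt hμ
  have hml : (m : ℝ) * (lam + 1) ≠ 0 := by
    have : (1:ℝ) ≤ (m:ℝ) := by exact_mod_cast hm
    positivity
  have hc : (m : ℝ) * (lam + 1) + 2 * ((k : ℝ) + 1) ≠ 0 := by
    have : (1:ℝ) ≤ (m:ℝ) := by exact_mod_cast hm
    positivity
  constructor
  · intro h
    have hYG := h.unique (grad_aux μ lam hμ' a X)
    subst hYG
    funext ℓ
    simp only [smul_add, smul_sub, Finset.sum_add_distrib, Finset.sum_sub_distrib,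
      ← Finset.smul_sum, Finset.sum_const, Finset.card_univ, Fintype.card_fin, PiLp.toLp_apply]
    match_scalars <;> field_simp <;> ring
  · intro h
    rw [← WithLp.toLp_ofLp (x := X), h]
    have hG := grad_aux μ lam hμ' a (WithLp.toLp 2 fun ℓ =>
          (1 / ((m : ℝ) * (lam + 1) + 2 * ((k : ℝ) + 1))) •
              ((1 + lam) • (∑ i, a i) + μ • Y ℓ)
            + (2 / ((m : ℝ) * (lam + 1) * ((m : ℝ) * (lam + 1) + 2 * ((k : ℝ) + 1)))) •
              (∑ j, ((1 + lam) • (∑ i, a i) + μ • Y j)))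
    convert hG using 1
    refine WithLp.ofLp_injective 2 ?_
    funext ℓ
    simp only [smul_add, smul_sub, Finset.sum_add_distrib, Finset.sum_sub_distrib,
      ← Finset.smul_sum, Finset.sum_const, Finset.card_univ, Fintype.card_fin, PiLp.toLp_apply]
    match_scalars <;> field_simp <;> ring
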